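/- Let x ⊂ ℝ² be a unimodular lattice, Q₀(v₁,v₂) = v₁v₂, and g_t = diag(e^t, e^{−t}). If the set of values Q₀(x \ {0}) contains sequences approaching 0 from both the positive and the negative side, then Q₀(x \ {0}) is dense in ℝ. -/

import Mathlib

lemma key (t q δ : ℝ) (ht : 0 ≤ t) (hδ : 0 < δ) (hq0 : 0 < q)
    (hq1 : q < δ/2) (hq2 : q < δ^2/(16*(t+1))) :
    ∃ n : ℕ, 1 ≤ n ∧ t ≤ (n:ℝ)^2 * q ∧ (n:ℝ)^2 * q < t + δ := by
  set s := Real.sqrt (t/q) with hs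
  have hs0 : 0 ≤ s := Real.sqrt_nonneg _
  have hns : s ≤ ((max 1 ⌈s⌉₊ : ℕ) : ℝ) := by
    calc s ≤ (⌈s⌉₊ : ℝ) := Nat.le_ceil s
      _ ≤ ((max 1 ⌈s⌉₊ : ℕ) : ℝ) := by exact_mod_cast Nat.cast_le.mpr (le_max_right _ _)
  have hss : s^2 = t/q := Real.sq_sqrt (div_nonneg ht hq0.le)
  refine ⟨max 1 ⌈s⌉₊, le_max_left _ _, ?_, ?_⟩
  · have h1 : t/q ≤ ((max 1 ⌈s⌉₊ : ℕ):ℝ)^2 := by nlinarith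
    calc t = (t/q) * q := by field_simp
      _ ≤ _ := by nlinarith
  · have hub : ((max 1 ⌈s⌉₊ : ℕ):ℝ) ≤ s + 1 := by
      rw [Nat.cast_max]
      refine max_le (by norm_num; linarith) (Nat.ceil_lt_add_one hs0).le
    have hsq : s * q = Real.sqrt (t*q) := by
      rw [hs, show t*q = (t/q) * q^2 by field_simp,
        Real.sqrt_mul (div_nonneg ht hq0.le), Real.sqrt_sq hq0.le]
    have hsqrtb : Real.sqrt (t*q) ≤ δ/4 := by
      have h3 : (t+1)*q < δ^2/16 := by
        have ht1 : (0:ℝ) < 16*(t+1) := by linarith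
        rw [lt_div_iff₀ ht1] at hq2
        nlinarith
      have h1 : t*q ≤ (δ/4)^2 := by nlinarith
      calc Real.sqrt (t*q) ≤ Real.sqrt ((δ/4)^2) := Real.sqrt_le_sqrt h1
        _ = δ/4 := Real.sqrt_sq (by linarith)
    have hcast0 : (0:ℝ) ≤ ((max 1 ⌈s⌉₊ : ℕ):ℝ) := Nat.cast_nonneg _
    have h2 : ((max 1 ⌈s⌉₊ : ℕ):ℝ)^2 * q ≤ (s+1)^2 * q := by
      have := pow_le_pow_left₀ hcast0 hub 2
      nlinarith
    have hsqt : s^2 * q = t := by rw [hss]; field_simp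
    have hexp : (s+1)^2 * q = t + 2*(s*q) + q := by nlinarith
    rw [hsq] at hexp
    nlinarith [Real.sqrt_nonneg (t*q)]

/-- If a unimodular lattice x ⊂ ℝ² is such that Q₀(x \ {0}) (where
Q₀(v₁,v₂) = v₁v₂) contains sequences approaching 0 from both sides, then
Q₀(x \ {0}) is dense in ℝ. -/
theorem stmt1 (L : Set (ℝ × ℝ)) (v w : ℝ × ℝ)
    (hunimod : |v.1 * w.2 - v.2 * w.1| = 1)
    (hL : L = {u : ℝ × ℝ | ∃ m n : ℤ, u = m • v + n • w})
    (hpos : ∀ ε > 0, ∃ u ∈ L, 0 < u.1 * u.2 ∧ u.1 * u.2 < ε)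
    (hneg : ∀ ε > 0, ∃ u ∈ L, -ε < u.1 * u.2 ∧ u.1 * u.2 < 0) :
    Dense ((fun u : ℝ × ℝ => u.1 * u.2) '' (L \ {0})) := by
  have hscale : ∀ u ∈ L, ∀ n : ℕ, ((n:ℝ) * u.1, (n:ℝ) * u.2) ∈ L := by
    intro u hu n
    rw [hL] at hu ⊢
    obtain ⟨m, k, hm⟩ := hu
    refine ⟨(n:ℤ)*m, (n:ℤ)*k, ?_⟩
    have h1 : u.1 = (m:ℝ) * v.1 + (k:ℝ) * w.1 := by
      rw [hm]; simp [Prod.fst_add, zsmul_eq_mul]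
    have h2 : u.2 = (m:ℝ) * v.2 + (k:ℝ) * w.2 := by
      rw [hm]; simp [Prod.snd_add, zsmul_eq_mul]
    have : ∀ z : ℤ, ∀ p : ℝ × ℝ, (z • p).1 = (z:ℝ) * p.1 ∧ (z • p).2 = (z:ℝ) * p.2 := by
      intro z p; constructor <;> simp [zsmul_eq_mul]
    apply Prod.ext
    · simp [Prod.fst_add, zsmul_eq_mul, h1]; push_cast; ring
    · simp [Prod.snd_add, zsmul_eq_mul, h2]; push_cast; ring
  rw [Metric.dense_iff]
  intro x r hr
  rcases le_or_gt 0 x with hx | hx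
  · -- positive target: use hpos
    set ε := min (r/2) (r^2/(16*(x+1))) with hε
    have hε0 : 0 < ε := by
      apply lt_min (by linarith)
      positivity
    obtain ⟨u, huL, hq0, hqε⟩ := hpos ε hε0
    set q := u.1 * u.2 with hq
    obtain ⟨n, hn1, hmid1, hmid2⟩ := key x q r hx hr hq0
      (lt_of_lt_of_le hqε (min_le_left _ _)) (lt_of_lt_of_le hqε (min_le_right _ _))
    refine ⟨(n:ℝ)^2 * q, ?_, ?_⟩
    · rw [Metric.mem_ball, Real.dist_eq, abs_lt]; constructor <;> linarith
    · refine ⟨((n:ℝ) * u.1, (n:ℝ) * u.2), ⟨hscale u huL n, ?_⟩, by simp [hq]; ring⟩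
      simp only [Set.mem_singleton_iff, Prod.mk_eq_zero]
      intro ⟨h1, h2⟩
      have hz : (n:ℝ)^2 * q = 0 := by rw [hq]; nlinarith
      have hn1' : (1:ℝ) ≤ (n:ℝ) := by exact_mod_cast hn1
      have hp : 0 < (n:ℝ)^2 * q := mul_pos (by nlinarith) hq0
      linarith
  · -- negative target: use hneg
    set ε := min (r/2) (r^2/(16*(-x+1))) with hε
    have hε0 : 0 < ε := by
      apply lt_min (by linarith)
      have : (0:ℝ) < -x + 1 := by linarith
      positivity
    obtain ⟨u, huL, hqε, hq0⟩ := hneg ε hε0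
    set q := u.1 * u.2 with hq
    obtain ⟨n, hn1, hmid1, hmid2⟩ := key (-x) (-q) r (by linarith) hr (by linarith)
      (by have := lt_of_lt_of_le (neg_lt_neg hqε) (le_refl _); have h := min_le_left (r/2) (r^2/(16*(-x+1))); linarith [min_le_left (r/2) (r^2/(16*(-x+1)))])
      (by linarith [min_le_right (r/2) (r^2/(16*(-x+1)))])
    have hmid1' : (n:ℝ)^2 * q ≤ x := by nlinarith
    have hmid2' : x - r < (n:ℝ)^2 * q := by nlinarith
    refine ⟨(n:ℝ)^2 * q, ?_, ?_⟩
    · rw [Metric.mem_ball, Real.dist_eq, abs_lt]; constructor <;> linarith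
    · refine ⟨((n:ℝ) * u.1, (n:ℝ) * u.2), ⟨hscale u huL n, ?_⟩, by simp [hq]; ring⟩
      simp only [Set.mem_singleton_iff, Prod.mk_eq_zero]
      intro ⟨h1, h2⟩
      have hz : (n:ℝ)^2 * q = 0 := by rw [hq]; nlinarith
      have hn1' : (1:ℝ) ≤ (n:ℝ) := by exact_mod_cast hn1
      have hp : (n:ℝ)^2 * q < 0 := mul_neg_of_pos_of_neg (by nlinarith) hq0
      linarith
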